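/- Let M be a Hadamard manifold and π a probability measure on M with finite first-order moments, i.e. ∫ d(x, y₀) π(dx) < ∞ for some y₀ ∈ M. Then the function V_π(y) = ∫ (δ²[1 + (d(x,y)/δ)²]^{1/2} − δ²) π(dx) is finite-valued, strictly convex, tends to +∞ as y → ∞, and has a unique global minimiser x* ∈ M (the robust Riemannian barycentre of π). -/

import Mathlib

set_option maxHeartbeats 1000000


open MeasureTheory

/-- A Hadamard space: a complete geodesic metric space satisfying the CAT(0)
(non-positive curvature) comparison inequality.  This abstracts a Hadamard manifold. -/
class HadamardSpace (M : Type*) extends MetricSpace M where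
  geo : M → M → ℝ → M
  geo_zero : ∀ x y : M, geo x y 0 = x
  geo_one : ∀ x y : M, geo x y 1 = y
  geo_dist : ∀ x y : M, ∀ s ∈ Set.Icc (0:ℝ) 1, ∀ t ∈ Set.Icc (0:ℝ) 1,
    dist (geo x y s) (geo x y t) = |s - t| * dist x y
  cat0 : ∀ x y z : M, ∀ t ∈ Set.Icc (0:ℝ) 1,
    dist (geo x y t) z ^ 2 ≤
      (1 - t) * dist x z ^ 2 + t * dist y z ^ 2 - t * (1 - t) * dist x y ^ 2
  complete : CompleteSpace M

/-- The robust cost `V_x(y) = δ²[1 + (d(x,y)/δ)²]^{1/2} − δ²`. -/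
noncomputable def huber {M : Type*} [MetricSpace M] (δ : ℝ) (x y : M) : ℝ :=
  δ ^ 2 * Real.sqrt (1 + (dist x y / δ) ^ 2) - δ ^ 2

/-- Let `M` be a Hadamard manifold and `π` a probability measure on `M` with finite
first-order moments (`∫ d(x,y₀) π(dx) < ∞` for some `y₀`).  Then
`V_π(y) = ∫ (δ²[1 + (d(x,y)/δ)²]^{1/2} − δ²) π(dx)` is finite-valued (proper), strictly
convex along every geodesic, tends to `+∞` as `y → ∞`, and has a unique global minimiser
`x* ∈ M` — the robust Riemannian barycentre of `π`. -/


theorem huber_eq {M : Type*} [MetricSpace M] {δ : ℝ} (hδ : 0 < δ) (x y : M) :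
    huber δ x y = δ * Real.sqrt (δ^2 + dist x y ^2) - δ^2 := by
  unfold huber
  have h : δ^2 + dist x y ^2 = δ^2 * (1 + (dist x y / δ)^2) := by
    field_simp
  rw [h, Real.sqrt_mul (by positivity), Real.sqrt_sq hδ.le]
  ring

theorem sqrt_diff_sq_le {δ : ℝ} (hδ : 0 < δ) {a b : ℝ} (ha : 0 ≤ a) (hb : 0 ≤ b) :
    (Real.sqrt (δ^2+a^2) - Real.sqrt (δ^2+b^2))^2 ≤ (a-b)^2 := by
  set p := Real.sqrt (δ^2+a^2) with hpdef
  set q := Real.sqrt (δ^2+b^2) with hqdef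
  have hp : p^2 = δ^2+a^2 := Real.sq_sqrt (by positivity)
  have hq : q^2 = δ^2+b^2 := Real.sq_sqrt (by positivity)
  have hp0 : 0 ≤ p := Real.sqrt_nonneg _
  have hq0 : 0 ≤ q := Real.sqrt_nonneg _
  have hpa : a ≤ p := by nlinarith
  have hqb : b ≤ q := by nlinarith
  have hpq : 0 < p + q := by nlinarith
  have h1 : (p-q)*(p+q) = (a-b)*(a+b) := by linear_combination hp - hq
  have h2 : (p-q)^2*(p+q)^2 = (a-b)^2*(a+b)^2 := by nlinarith [h1]
  have h3 : (a+b)^2 ≤ (p+q)^2 := by nlinarith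
  have h4 : (a-b)^2*(a+b)^2 ≤ (a-b)^2*(p+q)^2 :=
    mul_le_mul_of_nonneg_left h3 (sq_nonneg _)
  exact le_of_mul_le_mul_right (by linarith) (by positivity : (0:ℝ) < (p+q)^2)

theorem sqrt_diff_sq_lt {δ : ℝ} (hδ : 0 < δ) {a b D : ℝ} (ha : 0 ≤ a) (hb : 0 ≤ b)
    (hab : (a-b)^2 ≤ D^2) (hD : 0 < D) :
    (Real.sqrt (δ^2+a^2) - Real.sqrt (δ^2+b^2))^2 < D^2 := by
  rcases eq_or_ne a b with rfl | hne
  · simpa [sub_self] using (by positivity : (0:ℝ) < D^2)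
  · set p := Real.sqrt (δ^2+a^2) with hpdef
    set q := Real.sqrt (δ^2+b^2) with hqdef
    have hp : p^2 = δ^2+a^2 := Real.sq_sqrt (by positivity)
    have hq : q^2 = δ^2+b^2 := Real.sq_sqrt (by positivity)
    have hp0 : 0 ≤ p := Real.sqrt_nonneg _
    have hq0 : 0 ≤ q := Real.sqrt_nonneg _
    have hpa : a < p := by nlinarith
    have hqb : b < q := by nlinarith
    have hpq : 0 < p + q := by nlinarith
    have h1 : (p-q)*(p+q) = (a-b)*(a+b) := by linear_combination hp - hq
    have h2 : (p-q)^2*(p+q)^2 = (a-b)^2*(a+b)^2 := by nlinarith [h1]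
    have hab2 : 0 < (a-b)^2 := by
      rcases sub_ne_zero_of_ne hne with h
      positivity
    have h3 : (a+b)^2 < (p+q)^2 := by nlinarith
    have h4 : (a-b)^2*(a+b)^2 < (a-b)^2*(p+q)^2 :=
      mul_lt_mul_of_pos_left h3 hab2
    have h5 : (p-q)^2*(p+q)^2 < (a-b)^2*(p+q)^2 := by linarith
    have hlt : (p-q)^2 < (a-b)^2 := lt_of_mul_lt_mul_right h5 (sq_nonneg (p+q))
    linarith

theorem hc_le {δ : ℝ} (hδ : 0 < δ) {a b c D t : ℝ} (ha : 0 ≤ a) (hb : 0 ≤ b)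
    (hab : (a-b)^2 ≤ D^2) (ht0 : 0 ≤ t) (ht1 : t ≤ 1)
    (hc : c^2 ≤ (1-t)*a^2 + t*b^2 - t*(1-t)*D^2) :
    Real.sqrt (δ^2+c^2) ≤ (1-t)*Real.sqrt (δ^2+a^2) + t*Real.sqrt (δ^2+b^2) := by
  set p := Real.sqrt (δ^2+a^2) with hpdef
  set q := Real.sqrt (δ^2+b^2) with hqdef
  have hp : p^2 = δ^2+a^2 := Real.sq_sqrt (by positivity)
  have hq : q^2 = δ^2+b^2 := Real.sq_sqrt (by positivity)
  have hp0 : 0 ≤ p := Real.sqrt_nonneg _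
  have hq0 : 0 ≤ q := Real.sqrt_nonneg _
  have hd := sqrt_diff_sq_le hδ ha hb
  rw [← hpdef, ← hqdef] at hd
  have e2 : 0 ≤ t*(1-t)*(D^2-(p-q)^2) := by
    have : (p-q)^2 ≤ D^2 := le_trans hd hab
    have h1t : 0 ≤ 1 - t := by linarith
    have := mul_nonneg (mul_nonneg ht0 h1t) (by linarith : 0 ≤ D^2-(p-q)^2)
    linarith
  have key : δ^2+c^2 ≤ ((1-t)*p+t*q)^2 := by nlinarith
  calc Real.sqrt (δ^2+c^2) ≤ Real.sqrt (((1-t)*p+t*q)^2) := Real.sqrt_le_sqrt key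
    _ = (1-t)*p+t*q := Real.sqrt_sq (by nlinarith)

theorem hc_lt {δ : ℝ} (hδ : 0 < δ) {a b c D t : ℝ} (ha : 0 ≤ a) (hb : 0 ≤ b)
    (hab : (a-b)^2 ≤ D^2) (hD : 0 < D) (ht0 : 0 < t) (ht1 : t < 1)
    (hc : c^2 ≤ (1-t)*a^2 + t*b^2 - t*(1-t)*D^2) :
    Real.sqrt (δ^2+c^2) < (1-t)*Real.sqrt (δ^2+a^2) + t*Real.sqrt (δ^2+b^2) := by
  set p := Real.sqrt (δ^2+a^2) with hpdef
  set q := Real.sqrt (δ^2+b^2) with hqdef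
  have hp : p^2 = δ^2+a^2 := Real.sq_sqrt (by positivity)
  have hq : q^2 = δ^2+b^2 := Real.sq_sqrt (by positivity)
  have hp0 : 0 ≤ p := Real.sqrt_nonneg _
  have hq0 : 0 ≤ q := Real.sqrt_nonneg _
  have hd := sqrt_diff_sq_lt hδ ha hb hab hD
  rw [← hpdef, ← hqdef] at hd
  have e2 : 0 < t*(1-t)*(D^2-(p-q)^2) :=
    mul_pos (mul_pos ht0 (by linarith)) (by linarith)
  have key : δ^2+c^2 < ((1-t)*p+t*q)^2 := by nlinarith
  calc Real.sqrt (δ^2+c^2) < Real.sqrt (((1-t)*p+t*q)^2) :=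
        Real.sqrt_lt_sqrt (by positivity) key
    _ = (1-t)*p+t*q := Real.sqrt_sq (by nlinarith)


theorem le_sqrt_aux {δ u : ℝ} (hu : 0 ≤ u) : u ≤ Real.sqrt (δ^2+u^2) := by
  calc u = Real.sqrt (u^2) := (Real.sqrt_sq hu).symm
    _ ≤ _ := Real.sqrt_le_sqrt (by linarith [sq_nonneg δ])

theorem delta_le_sqrt_aux {δ u : ℝ} (hδ : 0 ≤ δ) : δ ≤ Real.sqrt (δ^2+u^2) := by
  calc δ = Real.sqrt (δ^2) := (Real.sqrt_sq hδ).symm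
    _ ≤ _ := Real.sqrt_le_sqrt (by linarith [sq_nonneg u])

theorem sqrt_mono_aux {δ u L : ℝ} (hu : 0 ≤ u) (h : u ≤ L) :
    Real.sqrt (δ^2+u^2) ≤ Real.sqrt (δ^2+L^2) :=
  Real.sqrt_le_sqrt (by have := pow_le_pow_left₀ hu h 2; linarith)

theorem hc_gain {δ : ℝ} (hδ : 0 < δ) {a b c D L : ℝ} (ha : 0 ≤ a) (hb : 0 ≤ b)
    (haL : a ≤ L) (hbL : b ≤ L) (hab : (a-b)^2 ≤ D^2) (hD : 0 ≤ D)
    (hc : c^2 ≤ 1/2*a^2 + 1/2*b^2 - 1/4*D^2) :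
    Real.sqrt (δ^2+c^2) ≤ 1/2*Real.sqrt (δ^2+a^2) + 1/2*Real.sqrt (δ^2+b^2)
      - δ^2*D^2/(8*Real.sqrt (δ^2+L^2)^3) := by
  have hL : 0 ≤ L := le_trans ha haL
  set p := Real.sqrt (δ^2+a^2) with hpdef
  set q := Real.sqrt (δ^2+b^2) with hqdef
  set Q := Real.sqrt (δ^2+L^2) with hQdef
  have hp : p^2 = δ^2+a^2 := by rw [hpdef]; exact Real.sq_sqrt (by positivity)
  have hq : q^2 = δ^2+b^2 := by rw [hqdef]; exact Real.sq_sqrt (by positivity)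
  have hQ : Q^2 = δ^2+L^2 := by rw [hQdef]; exact Real.sq_sqrt (by positivity)
  have hp0 : 0 ≤ p := hpdef ▸ Real.sqrt_nonneg _
  have hq0 : 0 ≤ q := hqdef ▸ Real.sqrt_nonneg _
  have hQ0 : 0 < Q := hQdef ▸ Real.sqrt_pos.mpr (by positivity)
  have hpδ : δ ≤ p := hpdef ▸ delta_le_sqrt_aux hδ.le
  have hqδ : δ ≤ q := hqdef ▸ delta_le_sqrt_aux hδ.le
  have hpQ : p ≤ Q := by rw [hpdef, hQdef]; exact sqrt_mono_aux ha haL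
  have hqQ : q ≤ Q := by rw [hqdef, hQdef]; exact sqrt_mono_aux hb hbL
  have hpa : a ≤ p := hpdef ▸ le_sqrt_aux ha
  have hqb : b ≤ q := hqdef ▸ le_sqrt_aux hb
  clear_value p q Q
  clear hpdef hqdef hQdef
  have hQ2 : (0:ℝ) < Q^2 := pow_pos hQ0 2
  have haL2 : a^2 ≤ L^2 := pow_le_pow_left₀ ha haL 2
  have hbL2 : b^2 ≤ L^2 := pow_le_pow_left₀ hb hbL 2
  have hpq : 0 < p + q := by linarith
  -- step 1 : (p-q)^2 * Q^2 ≤ D^2 * L^2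
  have aux1 : a*Q ≤ L*p := by
    have e : (L*p)^2 - (a*Q)^2 = δ^2*(L^2 - a^2) := by
      linear_combination L^2*hp - a^2*hQ
    have hnn : (0:ℝ) ≤ δ^2*(L^2-a^2) := mul_nonneg (sq_nonneg δ) (by linarith)
    have hsq : (a*Q)^2 ≤ (L*p)^2 := by linarith
    have h := Real.sqrt_le_sqrt hsq
    rwa [Real.sqrt_sq (mul_nonneg ha hQ0.le), Real.sqrt_sq (mul_nonneg hL hp0)] at h
  have aux2 : b*Q ≤ L*q := by
    have e : (L*q)^2 - (b*Q)^2 = δ^2*(L^2 - b^2) := by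
      linear_combination L^2*hq - b^2*hQ
    have hnn : (0:ℝ) ≤ δ^2*(L^2-b^2) := mul_nonneg (sq_nonneg δ) (by linarith)
    have hsq : (b*Q)^2 ≤ (L*q)^2 := by linarith
    have h := Real.sqrt_le_sqrt hsq
    rwa [Real.sqrt_sq (mul_nonneg hb hQ0.le), Real.sqrt_sq (mul_nonneg hL hq0)] at h
  have h1 : (p-q)*(p+q) = (a-b)*(a+b) := by linear_combination hp - hq
  have hsum : (a+b)*Q ≤ L*(p+q) := by
    calc (a+b)*Q = a*Q + b*Q := by ring
      _ ≤ L*p + L*q := add_le_add aux1 aux2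
      _ = L*(p+q) := by ring
  have h3 : ((a+b)*Q)^2 ≤ (L*(p+q))^2 :=
    pow_le_pow_left₀ (mul_nonneg (by linarith) hQ0.le) hsum 2
  have h4 : (a-b)^2*((a+b)*Q)^2 ≤ D^2*(L*(p+q))^2 :=
    mul_le_mul hab h3 (sq_nonneg _) (le_trans (sq_nonneg _) hab)
  have step1 : (p-q)^2 * Q^2 ≤ D^2 * L^2 := by
    have h5 : ((p-q)^2*Q^2)*(p+q)^2 ≤ (D^2*L^2)*(p+q)^2 := by
      have e : ((p-q)^2*Q^2)*(p+q)^2 = ((p-q)*(p+q))^2*Q^2 := by ring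
      rw [e, h1]
      calc ((a-b)*(a+b))^2*Q^2 = (a-b)^2*((a+b)*Q)^2 := by ring
        _ ≤ D^2*(L*(p+q))^2 := h4
        _ = (D^2*L^2)*(p+q)^2 := by ring
    exact le_of_mul_le_mul_right h5 (pow_pos hpq 2)
  -- step 2
  set A := 1/2*p + 1/2*q with hAdef
  set B := δ^2*D^2/(4*Q^2) with hBdef
  clear_value A B
  have e1 : A^2 = 1/2*p^2 + 1/2*q^2 - 1/4*(p-q)^2 := by rw [hAdef]; ring
  have f1 : δ^2+c^2 ≤ A^2 + 1/4*(p-q)^2 - 1/4*D^2 := by linarith [e1, hp, hq, hc]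
  have hQD : Q^2*D^2 = δ^2*D^2 + L^2*D^2 := by linear_combination D^2*hQ
  have step2' : Q^2*(δ^2+c^2) ≤ Q^2*A^2 - δ^2*D^2/4 := by
    have hmul := mul_le_mul_of_nonneg_left f1 hQ2.le
    calc Q^2*(δ^2+c^2) ≤ Q^2*(A^2 + 1/4*(p-q)^2 - 1/4*D^2) := hmul
      _ = Q^2*A^2 + 1/4*((p-q)^2*Q^2) - 1/4*(Q^2*D^2) := by ring
      _ ≤ Q^2*A^2 + 1/4*(D^2*L^2) - 1/4*(δ^2*D^2 + L^2*D^2) := by linarith [step1, hQD]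
      _ = Q^2*A^2 - δ^2*D^2/4 := by ring
  have step2 : δ^2+c^2 ≤ A^2 - B := by
    have h : B ≤ A^2 - (δ^2+c^2) := by
      rw [hBdef, div_le_iff₀ (by positivity : (0:ℝ) < 4*Q^2)]
      calc δ^2*D^2 ≤ 4*(Q^2*A^2) - 4*(Q^2*(δ^2+c^2)) := by linarith [step2']
        _ = (A^2 - (δ^2+c^2))*(4*Q^2) := by ring
    linarith
  have hAδ : δ ≤ A := by rw [hAdef]; linarith
  have hA0 : 0 < A := lt_of_lt_of_le hδ hAδ
  have hAne : A ≠ 0 := ne_of_gt hA0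
  have hB0 : 0 ≤ B := by rw [hBdef]; positivity
  have hAQ : A ≤ Q := by rw [hAdef]; linarith
  have hBA : B ≤ A^2 - δ^2 := by linarith [sq_nonneg c, step2]
  -- step 4 : sqrt(δ²+c²) ≤ A - B/(2A)
  have hrhs0 : 0 ≤ A - B/(2*A) := by
    rw [sub_nonneg, div_le_iff₀ (by linarith : (0:ℝ) < 2*A)]
    have e : A*(2*A) = 2*A^2 := by ring
    linarith [hBA, sq_nonneg A, sq_nonneg δ, e]
  have step4 : Real.sqrt (δ^2+c^2) ≤ A - B/(2*A) := by
    have e : (A - B/(2*A))^2 = A^2 - B + (B/(2*A))^2 := by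
      field_simp
      ring
    have hsq : δ^2+c^2 ≤ (A - B/(2*A))^2 := by
      linarith [step2, sq_nonneg (B/(2*A)), e]
    have h := Real.sqrt_le_sqrt hsq
    rwa [Real.sqrt_sq hrhs0] at h
  -- step 5 : δ²D²/(8Q³) ≤ B/(2A)
  have hQ3 : (0:ℝ) < Q^3 := pow_pos hQ0 3
  have step5 : δ^2*D^2/(8*Q^3) ≤ B/(2*A) := by
    rw [hBdef, div_div, div_le_div_iff₀ (by linarith) (by positivity)]
    have hint : (0:ℝ) ≤ δ^2*D^2*(Q^2*(Q-A)) :=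
      mul_nonneg (mul_nonneg (sq_nonneg δ) (sq_nonneg D))
        (mul_nonneg hQ2.le (by linarith))
    calc δ^2*D^2*(4*Q^2*(2*A)) = δ^2*D^2*(8*Q^3) - 8*(δ^2*D^2*(Q^2*(Q-A))) := by ring
      _ ≤ δ^2*D^2*(8*Q^3) := by linarith [hint]
  have final : Real.sqrt (δ^2+c^2) ≤ A - δ^2*D^2/(8*Q^3) := by linarith
  rw [hAdef] at final
  linarith


section Metric
variable {M : Type*} [HadamardSpace M] {δ : ℝ}
open HadamardSpace

theorem dist_sq_le (y z x : M) {t : ℝ} (ht : t ∈ Set.Icc (0:ℝ) 1) :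
    dist x (geo y z t)^2 ≤ (1-t)*dist x y^2 + t*dist x z^2 - t*(1-t)*dist y z^2 := by
  have h := HadamardSpace.cat0 y z x t ht
  rw [dist_comm y x, dist_comm z x, dist_comm (geo y z t) x] at h
  exact h

theorem dist_diff_sq (x y z : M) : (dist x y - dist x z)^2 ≤ dist y z^2 := by
  have habs := abs_dist_sub_le y z x
  rw [dist_comm y x, dist_comm z x] at habs
  have h := abs_le.1 habs
  apply sq_le_sq' <;> linarith [h.1, h.2]

theorem huber_convex_pt (hδ : 0 < δ) (x y z : M) {t : ℝ} (ht : t ∈ Set.Icc (0:ℝ) 1) :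
    huber δ x (geo y z t) ≤ (1-t)*huber δ x y + t*huber δ x z := by
  rw [huber_eq hδ, huber_eq hδ, huber_eq hδ]
  have h := hc_le hδ (dist_nonneg (x := x) (y := y)) (dist_nonneg (x := x) (y := z))
    (dist_diff_sq x y z) ht.1 ht.2 (dist_sq_le y z x ht)
  have hmul := mul_le_mul_of_nonneg_left h hδ.le
  have e : δ*((1-t)*Real.sqrt (δ^2+dist x y^2) + t*Real.sqrt (δ^2+dist x z^2))
      = (1-t)*(δ*Real.sqrt (δ^2+dist x y^2)) + t*(δ*Real.sqrt (δ^2+dist x z^2)) := by ring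
  rw [e] at hmul
  linarith

theorem huber_strict_pt (hδ : 0 < δ) (x : M) {y z : M} (hyz : y ≠ z) {t : ℝ}
    (ht : t ∈ Set.Ioo (0:ℝ) 1) :
    huber δ x (geo y z t) < (1-t)*huber δ x y + t*huber δ x z := by
  rw [huber_eq hδ, huber_eq hδ, huber_eq hδ]
  have hD : 0 < dist y z := dist_pos.mpr hyz
  have h := hc_lt hδ (dist_nonneg (x := x) (y := y)) (dist_nonneg (x := x) (y := z))
    (dist_diff_sq x y z) hD ht.1 ht.2
    (dist_sq_le y z x ⟨ht.1.le, ht.2.le⟩)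
  have hmul := mul_lt_mul_of_pos_left h hδ
  have e : δ*((1-t)*Real.sqrt (δ^2+dist x y^2) + t*Real.sqrt (δ^2+dist x z^2))
      = (1-t)*(δ*Real.sqrt (δ^2+dist x y^2)) + t*(δ*Real.sqrt (δ^2+dist x z^2)) := by ring
  rw [e] at hmul
  linarith

theorem huber_gain_pt (hδ : 0 < δ) {L : ℝ} {x y z : M}
    (hxy : dist x y ≤ L) (hxz : dist x z ≤ L) :
    huber δ x (geo y z (1/2 : ℝ)) ≤ 1/2*huber δ x y + 1/2*huber δ x z
      - δ^3*dist y z^2/(8*Real.sqrt (δ^2+L^2)^3) := by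
  rw [huber_eq hδ, huber_eq hδ, huber_eq hδ]
  have hmem : (1/2 : ℝ) ∈ Set.Icc (0:ℝ) 1 := by norm_num
  have hsq := dist_sq_le y z x hmem
  have h := hc_gain (c := dist x (geo y z (1/2:ℝ))) hδ (dist_nonneg (x := x) (y := y))
    (dist_nonneg (x := x) (y := z)) hxy hxz (dist_diff_sq x y z) dist_nonneg (by linarith)
  have hmul := mul_le_mul_of_nonneg_left h hδ.le
  have e : δ*(1/2*Real.sqrt (δ^2+dist x y^2) + 1/2*Real.sqrt (δ^2+dist x z^2)
        - δ^2*dist y z^2/(8*Real.sqrt (δ^2+L^2)^3))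
      = 1/2*(δ*Real.sqrt (δ^2+dist x y^2)) + 1/2*(δ*Real.sqrt (δ^2+dist x z^2))
        - δ^3*dist y z^2/(8*Real.sqrt (δ^2+L^2)^3) := by ring
  rw [e] at hmul
  linarith

theorem huber_nonneg (hδ : 0 < δ) (x y : M) : 0 ≤ huber δ x y := by
  rw [huber_eq hδ]
  have h := delta_le_sqrt_aux (δ := δ) (u := dist x y) hδ.le
  nlinarith

theorem huber_ge (hδ : 0 < δ) (x y : M) : δ*dist x y - δ^2 ≤ huber δ x y := by
  rw [huber_eq hδ]
  have h := le_sqrt_aux (δ := δ) (u := dist x y) dist_nonneg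
  nlinarith

theorem huber_le (hδ : 0 < δ) (x y : M) : huber δ x y ≤ δ*dist x y := by
  rw [huber_eq hδ]
  have h : Real.sqrt (δ^2+dist x y^2) ≤ δ + dist x y := by
    have e : δ + dist x y = Real.sqrt ((δ + dist x y)^2) :=
      (Real.sqrt_sq (by positivity)).symm
    rw [e]
    apply Real.sqrt_le_sqrt
    nlinarith [dist_nonneg (x := x) (y := y), hδ.le]
  nlinarith

theorem huber_lip (hδ : 0 < δ) (x y z : M) :
    |huber δ x y - huber δ x z| ≤ δ * dist y z := by
  rw [huber_eq hδ, huber_eq hδ]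
  have h := sqrt_diff_sq_le hδ (dist_nonneg (x := x) (y := y)) (dist_nonneg (x := x) (y := z))
  have h2 : (Real.sqrt (δ^2+dist x y^2) - Real.sqrt (δ^2+dist x z^2))^2 ≤ dist y z^2 :=
    le_trans h (dist_diff_sq x y z)
  have h3 : |Real.sqrt (δ^2+dist x y^2) - Real.sqrt (δ^2+dist x z^2)| ≤ dist y z := by
    have := Real.sqrt_le_sqrt h2
    rwa [Real.sqrt_sq_eq_abs, Real.sqrt_sq dist_nonneg] at this
  have e : δ * Real.sqrt (δ^2+dist x y^2) - δ^2 - (δ * Real.sqrt (δ^2+dist x z^2) - δ^2)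
      = δ * (Real.sqrt (δ^2+dist x y^2) - Real.sqrt (δ^2+dist x z^2)) := by ring
  rw [e, abs_mul, abs_of_pos hδ]
  exact mul_le_mul_of_nonneg_left h3 hδ.le

theorem huber_cont (hδ : 0 < δ) (y : M) : Continuous (fun x : M => huber δ x y) := by
  unfold huber
  fun_prop

end Metric

theorem stmt5 {M : Type*} [HadamardSpace M] [MeasurableSpace M] [BorelSpace M]
    (π : Measure M) [IsProbabilityMeasure π] (δ : ℝ) (hδ : 0 < δ)
    (y₀ : M) (hmom : Integrable (fun x => dist x y₀) π) :
    (∀ y : M, Integrable (fun x => huber δ x y) π) ∧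
      (∀ y z : M, y ≠ z → ∀ t ∈ Set.Ioo (0:ℝ) 1,
        (∫ x, huber δ x (HadamardSpace.geo y z t) ∂π)
          < (1 - t) * (∫ x, huber δ x y ∂π) + t * ∫ x, huber δ x z ∂π) ∧
      (∀ C : ℝ, ∃ R : ℝ, ∀ y : M, R < dist y₀ y → C < ∫ x, huber δ x y ∂π) ∧
      (∃! xstar : M, ∀ y : M, (∫ x, huber δ x xstar ∂π) ≤ ∫ x, huber δ x y ∂π) := by
  haveI : CompleteSpace M := HadamardSpace.complete
  haveI : Nonempty M := ⟨y₀⟩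
  set V : M → ℝ := fun y => ∫ x, huber δ x y ∂π with hVdef
  have hVy : ∀ y : M, (∫ x, huber δ x y ∂π) = V y := fun y => rfl
  -- Part 1 : integrability
  have hInt : ∀ y : M, Integrable (fun x => huber δ x y) π := by
    intro y
    have hmeas : AEStronglyMeasurable (fun x => huber δ x y) π :=
      (huber_cont hδ y).aestronglyMeasurable
    have hbound : ∀ x, ‖huber δ x y‖ ≤ δ*(dist x y₀ + dist y₀ y) := by
      intro x
      rw [Real.norm_eq_abs, abs_of_nonneg (huber_nonneg hδ x y)]
      calc huber δ x y ≤ δ * dist x y := huber_le hδ x y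
        _ ≤ δ*(dist x y₀ + dist y₀ y) :=
            mul_le_mul_of_nonneg_left (dist_triangle x y₀ y) hδ.le
    have hg : Integrable (fun x => δ*(dist x y₀ + dist y₀ y)) π :=
      (hmom.add (integrable_const _)).const_mul δ
    exact hg.mono' hmeas (Filter.Eventually.of_forall hbound)
  have hVlip : ∀ y z : M, |V y - V z| ≤ δ * dist y z := by
    intro y z
    have heq : V y - V z = ∫ x, (huber δ x y - huber δ x z) ∂π :=
      (integral_sub (hInt y) (hInt z)).symm
    have habsint : Integrable (fun x => |huber δ x y - huber δ x z|) π :=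
      ((hInt y).sub (hInt z)).abs
    have h1 : |∫ x, (huber δ x y - huber δ x z) ∂π|
        ≤ ∫ x, |huber δ x y - huber δ x z| ∂π := by
      simpa [Real.norm_eq_abs] using
        norm_integral_le_integral_norm (fun x => huber δ x y - huber δ x z) (μ := π)
    have h2 : ∫ x, |huber δ x y - huber δ x z| ∂π ≤ ∫ _x, (δ*dist y z : ℝ) ∂π :=
      integral_mono habsint (integrable_const _) (fun x => huber_lip hδ x y z)
    have h3 : ∫ _x, (δ*dist y z : ℝ) ∂π = δ*dist y z := by simp
    rw [heq]
    linarith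
  -- Part 2 : strict convexity
  have hstrict : ∀ y z : M, y ≠ z → ∀ t ∈ Set.Ioo (0:ℝ) 1,
      V (HadamardSpace.geo y z t) < (1-t)*V y + t*V z := by
    intro y z hyz t ht
    set w := HadamardSpace.geo y z t with hwdef
    have hpt : ∀ x, huber δ x w < (1-t)*huber δ x y + t*huber δ x z :=
      fun x => huber_strict_pt hδ x hyz ht
    have hfi : Integrable (fun x => ((1-t)*huber δ x y + t*huber δ x z) - huber δ x w) π :=
      (((hInt y).const_mul (1-t)).add ((hInt z).const_mul t)).sub (hInt w)
    have hpos : 0 < ∫ x, (((1-t)*huber δ x y + t*huber δ x z) - huber δ x w) ∂π := by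
      rw [integral_pos_iff_support_of_nonneg
        (fun x => sub_nonneg.mpr (le_of_lt (hpt x))) hfi]
      have hsupp : Function.support
          (fun x => ((1-t)*huber δ x y + t*huber δ x z) - huber δ x w) = Set.univ :=
        Set.eq_univ_of_forall (fun x => ne_of_gt (sub_pos.mpr (hpt x)))
      rw [hsupp, measure_univ]
      exact zero_lt_one
    have hfy : Integrable (fun x => (1-t)*huber δ x y) π := (hInt y).const_mul _
    have hfz : Integrable (fun x => t*huber δ x z) π := (hInt z).const_mul _
    have hfyz : Integrable (fun x => (1-t)*huber δ x y + t*huber δ x z) π := hfy.add hfz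
    have heq : ∫ x, (((1-t)*huber δ x y + t*huber δ x z) - huber δ x w) ∂π
        = ((1-t)*V y + t*V z) - V w := by
      rw [integral_sub hfyz (hInt w), integral_add hfy hfz,
        integral_const_mul, integral_const_mul]
    rw [heq] at hpos
    linarith
  -- Part 3 : coercivity
  have hcoer : ∀ C : ℝ, ∃ R : ℝ, ∀ y : M, R < dist y₀ y → C < V y := by
    intro C
    set I := ∫ x, dist x y₀ ∂π with hIdef
    refine ⟨(C + δ*I + δ^2)/δ, fun y hy => ?_⟩
    have hlow : ∀ x, δ*dist y₀ y - δ*dist x y₀ - δ^2 ≤ huber δ x y := by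
      intro x
      have h1 := huber_ge hδ x y
      have h2 : dist y₀ y ≤ dist y₀ x + dist x y := dist_triangle _ _ _
      rw [dist_comm y₀ x] at h2
      have h3 := mul_le_mul_of_nonneg_left h2 hδ.le
      have e : δ*(dist x y₀ + dist x y) = δ*dist x y₀ + δ*dist x y := by ring
      rw [e] at h3
      linarith
    have hgi : Integrable (fun x => δ*dist y₀ y - δ*dist x y₀ - δ^2) π :=
      ((integrable_const _).sub (hmom.const_mul δ)).sub (integrable_const _)
    have hc1 : Integrable (fun _ : M => δ*dist y₀ y) π := integrable_const _
    have hc2 : Integrable (fun x => δ*dist x y₀) π := hmom.const_mul δ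
    have hc3 : Integrable (fun x => δ*dist y₀ y - δ*dist x y₀) π := hc1.sub hc2
    have hgint : ∫ x, (δ*dist y₀ y - δ*dist x y₀ - δ^2) ∂π = δ*dist y₀ y - δ*I - δ^2 := by
      rw [integral_sub hc3 (integrable_const _), integral_sub hc1 hc2, integral_const_mul]
      simp [hIdef, integral_const_mul]
    have hVy2 : δ*dist y₀ y - δ*I - δ^2 ≤ V y := by
      have h := integral_mono hgi (hInt y) hlow
      rwa [hgint] at h
    rw [div_lt_iff₀ hδ] at hy
    nlinarith [hy]
  -- nonnegativity and infimum
  have hV0 : ∀ y, 0 ≤ V y := fun y => integral_nonneg (fun x => huber_nonneg hδ x y)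
  set m := ⨅ y, V y with hmdef
  have hbdd : BddBelow (Set.range V) := ⟨0, by rintro _ ⟨y, rfl⟩; exact hV0 y⟩
  have hmle : ∀ y, m ≤ V y := fun y => ciInf_le hbdd y
  have hseq : ∀ n : ℕ, ∃ y, V y < m + 1/(n+1) := by
    intro n
    apply exists_lt_of_ciInf_lt
    have h : (0:ℝ) < 1/((n:ℝ)+1) := by positivity
    rw [← hmdef]
    linarith
  choose u hu using hseq
  obtain ⟨R₀, hR₀⟩ := hcoer (m+1)
  have huball : ∀ n, dist y₀ (u n) ≤ R₀ := by
    intro n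
    by_contra h
    push_neg at h
    have h2 := hR₀ (u n) h
    have h3 : (1:ℝ)/((n:ℝ)+1) ≤ 1 := by
      rw [div_le_one (by positivity)]
      linarith [Nat.cast_nonneg (α := ℝ) n]
    linarith [hu n]
  set R := max R₀ 0 with hRdef
  have huball' : ∀ n, dist y₀ (u n) ≤ R := fun n => le_trans (huball n) (le_max_left _ _)
  have hR0' : (0:ℝ) ≤ R := le_max_right _ _
  -- a ball of positive measure
  have hK : ∃ K : ℕ, 0 < π (Metric.closedBall y₀ (K:ℝ)) := by
    by_contra h
    push_neg at h
    have hz : ∀ K : ℕ, π (Metric.closedBall y₀ (K:ℝ)) = 0 :=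
      fun K => le_antisymm (h K) zero_le
    have huniv : (Set.univ : Set M) = ⋃ n : ℕ, Metric.closedBall y₀ (n:ℝ) := by
      ext x
      simp only [Set.mem_univ, Set.mem_iUnion, Metric.mem_closedBall, true_iff]
      exact exists_nat_ge (dist x y₀)
    have hz2 : π Set.univ = 0 := by
      rw [huniv]
      refine le_antisymm (le_trans (measure_iUnion_le _) ?_) zero_le
      simp [hz]
    rw [measure_univ] at hz2
    exact one_ne_zero hz2
  obtain ⟨K, hKpos⟩ := hK
  set L : ℝ := (K:ℝ) + R + 1 with hLdef
  have hL0 : 0 < L := by positivity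
  set Q := Real.sqrt (δ^2+L^2) with hQdef
  have hQ0 : 0 < Q := Real.sqrt_pos.mpr (by positivity)
  set κ := δ^3*(π (Metric.closedBall y₀ (K:ℝ))).toReal/(8*Q^3) with hκdef
  have htoReal : 0 < (π (Metric.closedBall y₀ (K:ℝ))).toReal :=
    ENNReal.toReal_pos (ne_of_gt hKpos) (ne_of_lt (measure_lt_top π _))
  have hκ0 : 0 < κ := by rw [hκdef]; positivity
  -- integrated midpoint inequality
  have hmid : ∀ y z : M, dist y₀ y ≤ R → dist y₀ z ≤ R →
      V (HadamardSpace.geo y z (1/2:ℝ)) ≤ 1/2*V y + 1/2*V z - κ*dist y z^2 := by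
    intro y z hyR hzR
    set w := HadamardSpace.geo y z (1/2:ℝ) with hwdef
    set c : ℝ := δ^3*dist y z^2/(8*Q^3) with hcdef
    have hgpt : ∀ x, huber δ x w ≤ 1/2*huber δ x y + 1/2*huber δ x z
        - (Metric.closedBall y₀ (K:ℝ)).indicator (fun _ => c) x := by
      intro x
      by_cases hx : x ∈ Metric.closedBall y₀ (K:ℝ)
      · rw [Set.indicator_of_mem hx]
        have hdx : dist x y₀ ≤ (K:ℝ) := by rwa [Metric.mem_closedBall] at hx
        have h1 : dist x y ≤ L := by
          have h := dist_triangle x y₀ y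
          rw [hLdef]; linarith
        have h2 : dist x z ≤ L := by
          have h := dist_triangle x y₀ z
          rw [hLdef]; linarith
        have h3 := huber_gain_pt hδ (L := L) h1 h2
        rw [hcdef, hQdef]
        exact h3
      · rw [Set.indicator_of_notMem hx]
        have h := huber_convex_pt hδ x y z (t := 1/2) (by norm_num)
        norm_num at h ⊢
        linarith
    have hii : Integrable ((Metric.closedBall y₀ (K:ℝ)).indicator (fun _ => c)) π :=
      (integrable_const c).indicator Metric.isClosed_closedBall.measurableSet
    have hfy : Integrable (fun x => 1/2*huber δ x y) π := (hInt y).const_mul _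
    have hfz : Integrable (fun x => 1/2*huber δ x z) π := (hInt z).const_mul _
    have hfyz : Integrable (fun x => 1/2*huber δ x y + 1/2*huber δ x z) π := hfy.add hfz
    have hgi : Integrable (fun x => 1/2*huber δ x y + 1/2*huber δ x z
        - (Metric.closedBall y₀ (K:ℝ)).indicator (fun _ => c) x) π := hfyz.sub hii
    have hVw : V w ≤ ∫ x, (1/2*huber δ x y + 1/2*huber δ x z
        - (Metric.closedBall y₀ (K:ℝ)).indicator (fun _ => c) x) ∂π :=
      integral_mono (hInt w) hgi hgpt
    have hgeq : ∫ x, (1/2*huber δ x y + 1/2*huber δ x z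
        - (Metric.closedBall y₀ (K:ℝ)).indicator (fun _ => c) x) ∂π
        = 1/2*V y + 1/2*V z - (π (Metric.closedBall y₀ (K:ℝ))).toReal * c := by
      rw [integral_sub hfyz hii, integral_add hfy hfz,
        integral_const_mul, integral_const_mul,
        integral_indicator_const c Metric.isClosed_closedBall.measurableSet]
      simp [smul_eq_mul, measureReal_def, hVdef]
    rw [hgeq] at hVw
    have he : κ*dist y z^2 = (π (Metric.closedBall y₀ (K:ℝ))).toReal * c := by
      rw [hκdef, hcdef]; ring
    linarith
  -- the minimising sequence is Cauchy
  have hCauchy : CauchySeq u := by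
    rw [Metric.cauchySeq_iff]
    intro ε hε
    obtain ⟨N, hN⟩ := exists_nat_gt (1/(κ*ε^2))
    refine ⟨N, fun i hi j hj => ?_⟩
    have hmidij := hmid (u i) (u j) (huball' i) (huball' j)
    have hlow : m ≤ V (HadamardSpace.geo (u i) (u j) (1/2:ℝ)) := hmle _
    have hNi : (1:ℝ)/((i:ℝ)+1) ≤ 1/((N:ℝ)+1) := by
      apply one_div_le_one_div_of_le (by positivity)
      have : (N:ℝ) ≤ (i:ℝ) := Nat.cast_le.mpr hi
      linarith
    have hNj : (1:ℝ)/((j:ℝ)+1) ≤ 1/((N:ℝ)+1) := by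
      apply one_div_le_one_div_of_le (by positivity)
      have : (N:ℝ) ≤ (j:ℝ) := Nat.cast_le.mpr hj
      linarith
    have h2 : κ*dist (u i) (u j)^2 ≤ 1/((N:ℝ)+1) := by
      linarith [hu i, hu j]
    have h3 : 1/((N:ℝ)+1) < κ*ε^2 := by
      have hpos : (0:ℝ) < κ*ε^2 := by positivity
      rw [div_lt_iff₀ (by positivity : (0:ℝ) < (N:ℝ)+1)]
      have h4 : 1/(κ*ε^2) < (N:ℝ)+1 := lt_trans hN (by linarith)
      rw [div_lt_iff₀ hpos] at h4
      nlinarith [h4]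
    have h5 : dist (u i) (u j)^2 < ε^2 := by
      have h6 := lt_of_le_of_lt h2 h3
      have h7 : κ*dist (u i) (u j)^2 < κ*ε^2 := h6
      exact lt_of_mul_lt_mul_left h7 hκ0.le
    nlinarith [dist_nonneg (x := u i) (y := u j), hε]
  obtain ⟨xstar, hx⟩ := cauchySeq_tendsto_of_complete hCauchy
  have hxmin : ∀ y, V xstar ≤ V y := by
    intro y
    have hVstar : V xstar ≤ m := by
      refine le_of_forall_pos_le_add (fun ε hε => ?_)
      obtain ⟨N₁, hN₁⟩ := (Metric.tendsto_atTop).1 hx (ε/(2*δ)) (by positivity)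
      obtain ⟨N₂, hN₂⟩ := exists_nat_gt (2/ε)
      set n := max N₁ N₂ with hndef
      have hd := hN₁ n (le_max_left _ _)
      have habs := (abs_le.1 (hVlip xstar (u n))).2
      rw [dist_comm xstar (u n)] at habs
      have h6 : δ*dist (u n) xstar ≤ δ*(ε/(2*δ)) := mul_le_mul_of_nonneg_left hd.le hδ.le
      have h7 : δ*(ε/(2*δ)) = ε/2 := by field_simp
      have h8 : 1/((n:ℝ)+1) < ε/2 := by
        have hn2 : (2:ℝ)/ε < (n:ℝ)+1 := by
          have hcast : (N₂:ℝ) ≤ (n:ℝ) := Nat.cast_le.mpr (le_max_right N₁ N₂)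
          linarith [hN₂]
        rw [div_lt_iff₀ hε] at hn2
        rw [div_lt_iff₀ (by positivity : (0:ℝ) < (n:ℝ)+1)]
        nlinarith [hn2]
      linarith [hu n, habs, h6, h8]
    exact le_trans hVstar (hmle y)
  refine ⟨hInt, ?_, ?_, ⟨xstar, ?_, ?_⟩⟩
  · intro y z hyz t ht
    rw [hVy, hVy, hVy]
    exact hstrict y z hyz t ht
  · intro C
    obtain ⟨R', hR'⟩ := hcoer C
    exact ⟨R', fun y hy => by rw [hVy]; exact hR' y hy⟩
  · intro y
    rw [hVy, hVy]
    exact hxmin y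
  · intro q hq
    simp only [hVy] at hq
    by_contra hne
    have hs := hstrict q xstar hne (1/2) (by norm_num)
    have h1 : V q ≤ V (HadamardSpace.geo q xstar (1/2:ℝ)) := hq _
    have h2 : V xstar = V q := le_antisymm (hxmin q) (hq xstar)
    norm_num at hs
    linarith
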